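/- Let D be a central division algebra over a nonarchimedean local field K. Then D contains a unique maximal order, namely the set of elements of D integral over O_K, which equals {x ∈ D : |x| ≤ 1} for the extended absolute value. -/

import Mathlib

/-- A nonarchimedean local field: a nontrivially normed field whose norm is
nonarchimedean and which is locally compact. -/
class NonarchLocalField (K : Type*) extends NontriviallyNormedField K where
  isNonarchimedean : IsNonarchimedean (norm : K → ℝ)
  locallyCompact : LocallyCompactSpace K

/-- `s` is a full `O`-lattice in the finite-dimensional `K`-algebra (or vector space) `A`:
it is contained in a finitely generated `O`-submodule and spans `A` over `K`. -/
def IsFullLattice (K : Type*) [Field K] {A : Type*} [Ring A] [Algebra K A]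
    (O : Subring K) (s : Set A) : Prop :=
  letI : Algebra O A := ((algebraMap K A).comp O.subtype).toAlgebra' (fun c x => Algebra.commutes (c : K) x)
  (∃ t : Finset A, s ⊆ (Submodule.span O (t : Set A) : Set A)) ∧
    Submodule.span K s = ⊤

/-- An `O`-order of maximal rank in `A`: a subring which is a full `O`-lattice
and is stable under multiplication by `O`. -/
def IsOrder (K : Type*) [Field K] {A : Type*} [Ring A] [Algebra K A]
    (O : Subring K) (D : Subring A) : Prop :=
  IsFullLattice K O (D : Set A) ∧ ∀ c ∈ O, ∀ x ∈ D, algebraMap K A c * x ∈ D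

/-- A maximal `O`-order in `A`. -/
def IsMaximalOrder (K : Type*) [Field K] {A : Type*} [Ring A] [Algebra K A]
    (O : Subring K) (D : Subring A) : Prop :=
  IsOrder K O D ∧ ∀ D' : Subring A, IsOrder K O D' → D ≤ D' → D = D'

/-- The set of elements of `D` integral over the subring `O` of `K`. -/
def integralSet (K : Type*) [Field K] (O : Subring K)
    (D : Type*) [Ring D] [Algebra K D] : Set D :=
  letI : Algebra O D :=
    ((algebraMap K D).comp O.subtype).toAlgebra' (fun c x => Algebra.commutes (c : K) x)
  {x : D | IsIntegral O x}

section AuxNLF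

variable {K : Type*} [NonarchLocalField K]

lemma NLF.narch_sub_ge {a b : K} (h : ‖a‖ < ‖b‖) : ‖b‖ ≤ ‖b - a‖ := by
  have hna := NonarchLocalField.isNonarchimedean (K := K)
  have h2 : ‖b‖ ≤ max ‖b - a‖ ‖a‖ := by
    have := hna (b - a) a
    rwa [sub_add_cancel] at this
  rcases le_max_iff.mp h2 with h3 | h3
  · exact h3
  · linarith

lemma NLF.exists_uniformizer (K : Type*) [NonarchLocalField K] :
    ∃ π : K, 0 < ‖π‖ ∧ ‖π‖ < 1 ∧ ∀ x : K, ‖x‖ < 1 → ‖x‖ ≤ ‖π‖ := by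
  haveI : LocallyCompactSpace K := NonarchLocalField.locallyCompact
  haveI : ProperSpace K := ProperSpace.of_locallyCompactSpace K
  obtain ⟨c, hc⟩ := NormedField.exists_one_lt_norm K
  have hc0 : (0:ℝ) < ‖c⁻¹‖ := by
    rw [norm_inv]; exact inv_pos.mpr (lt_trans one_pos hc)
  have hc1 : ‖c⁻¹‖ < 1 := by
    rw [norm_inv]; exact inv_lt_one_of_one_lt₀ hc
  by_contra hcon
  push_neg at hcon
  have step : ∀ t : {x : K // 0 < ‖x‖ ∧ ‖x‖ < 1},
      ∃ t' : {x : K // 0 < ‖x‖ ∧ ‖x‖ < 1}, ‖t.1‖ < ‖t'.1‖ := by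
    rintro ⟨x, hx0, hx1⟩
    obtain ⟨y, hy1, hy2⟩ := hcon x hx0 hx1
    exact ⟨⟨y, lt_trans hx0 hy2, hy1⟩, hy2⟩
  choose F hF using step
  set t0 : {x : K // 0 < ‖x‖ ∧ ‖x‖ < 1} := ⟨c⁻¹, hc0, hc1⟩ with ht0
  set u : ℕ → K := fun n => (F^[n] t0).1 with hu
  have hmono : StrictMono (fun n => ‖u n‖) := by
    apply strictMono_nat_of_lt_succ
    intro n
    have h : F^[n+1] t0 = F (F^[n] t0) := Function.iterate_succ_apply' F n t0
    simpa [hu, h] using hF (F^[n] t0)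
  have hlb : ∀ n, ‖c⁻¹‖ ≤ ‖u n‖ := by
    intro n
    have := hmono.monotone (Nat.zero_le n)
    simpa [hu, ht0] using this
  have hmem : ∀ n, u n ∈ Metric.closedBall (0:K) 1 := by
    intro n
    rw [Metric.mem_closedBall, dist_zero_right]
    exact le_of_lt (F^[n] t0).2.2
  obtain ⟨a, -, φ, hφ, hconv⟩ := (isCompact_closedBall (0:K) 1).tendsto_subseq hmem
  have hcauchy : CauchySeq (u ∘ φ) := hconv.cauchySeq
  obtain ⟨N, hN⟩ := Metric.cauchySeq_iff.mp hcauchy ‖c⁻¹‖ hc0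
  have h1 := hN (N+1) (by omega) N (le_refl N)
  rw [Function.comp_apply, Function.comp_apply, dist_eq_norm] at h1
  have h2 : ‖u (φ N)‖ < ‖u (φ (N+1))‖ := hmono (hφ (by omega))
  have h3 := NLF.narch_sub_ge h2
  have h4 := hlb (φ (N+1))
  linarith

lemma NLF.norm_mem_pows {π : K} (hπ0 : 0 < ‖π‖) (hπ1 : ‖π‖ < 1)
    (hmax : ∀ x : K, ‖x‖ < 1 → ‖x‖ ≤ ‖π‖) {x : K} (hx : x ≠ 0) (hx1 : ‖x‖ ≤ 1) :
    ∃ n : ℕ, ‖x‖ = ‖π‖ ^ n := by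
  have hx0 : 0 < ‖x‖ := norm_pos_iff.mpr hx
  have hex : ∃ m : ℕ, ‖π‖ ^ m < ‖x‖ := exists_pow_lt_of_lt_one hx0 hπ1
  have hklt : ‖π‖ ^ Nat.find hex < ‖x‖ := Nat.find_spec hex
  have hkpos : Nat.find hex ≠ 0 := by
    intro h
    rw [h, pow_zero] at hklt; linarith
  obtain ⟨n, hn⟩ : ∃ n, Nat.find hex = n + 1 := ⟨Nat.find hex - 1, by omega⟩
  have hle : ‖x‖ ≤ ‖π‖ ^ n := le_of_not_gt (fun h => Nat.find_min hex (by omega) h)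
  refine ⟨n, ?_⟩
  have hπK : π ≠ 0 := norm_pos_iff.mp hπ0
  have hπn : (0:ℝ) < ‖π‖ ^ n := by positivity
  have hyn : ‖x / π ^ n‖ = ‖x‖ / ‖π‖ ^ n := by rw [norm_div, norm_pow]
  have hy1 : ‖x / π ^ n‖ ≤ 1 := by rw [hyn]; exact div_le_one_of_le₀ hle (le_of_lt hπn)
  have hygt : ‖π‖ < ‖x / π ^ n‖ := by
    rw [hyn, lt_div_iff₀ hπn]
    calc ‖π‖ * ‖π‖ ^ n = ‖π‖ ^ (n + 1) := (pow_succ' ‖π‖ n).symm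
    _ < ‖x‖ := by rw [← hn]; exact hklt
  have hyeq : ‖x / π ^ n‖ = 1 := by
    by_contra h
    have := hmax _ (lt_of_le_of_ne hy1 h)
    linarith
  have : ‖x‖ = ‖x / π ^ n‖ * ‖π‖ ^ n := by
    rw [hyn]; field_simp
  rw [this, hyeq, one_mul]

lemma NLF.O_pid (O : Subring K) (hO : ∀ x : K, x ∈ O ↔ ‖x‖ ≤ 1)
    {π : K} (hπ0 : 0 < ‖π‖) (hπ1 : ‖π‖ < 1)
    (hmax : ∀ x : K, ‖x‖ < 1 → ‖x‖ ≤ ‖π‖) : IsPrincipalIdealRing O := by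
  classical
  constructor
  intro I
  by_cases hI : I = ⊥
  · subst hI; exact bot_isPrincipal
  · obtain ⟨x0, hx0I, hx0⟩ := Submodule.exists_mem_ne_zero_of_ne_bot hI
    have hEne : ∃ n : ℕ, ∃ g : O, g ∈ I ∧ g ≠ 0 ∧ ‖(g:K)‖ = ‖π‖ ^ n := by
      have hxne : (x0 : K) ≠ 0 := fun h => hx0 (Subtype.ext h)
      obtain ⟨n, hn⟩ := NLF.norm_mem_pows hπ0 hπ1 hmax hxne ((hO _).mp x0.2)
      exact ⟨n, x0, hx0I, hx0, hn⟩
    obtain ⟨g, hgI, hg0, hgn⟩ := Nat.find_spec hEne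
    refine ⟨⟨g, ?_⟩⟩
    apply le_antisymm
    · intro y hy
      by_cases hy0 : y = 0
      · simp [hy0]
      · have hyne : (y : K) ≠ 0 := fun h => hy0 (Subtype.ext h)
        obtain ⟨m, hm⟩ := NLF.norm_mem_pows hπ0 hπ1 hmax hyne ((hO _).mp y.2)
        have hmn : Nat.find hEne ≤ m := Nat.find_min' hEne ⟨y, hy, hy0, hm⟩
        have hgK : (g : K) ≠ 0 := fun h => hg0 (Subtype.ext h)
        have hqn : ‖(y : K) / (g : K)‖ ≤ 1 := by
          rw [norm_div, hm, hgn, div_le_one (by positivity)]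
          exact pow_le_pow_of_le_one (le_of_lt hπ0) (le_of_lt hπ1) hmn
        have hq : (y : K) / (g : K) ∈ O := (hO _).mpr hqn
        have hyq : y = ⟨(y : K) / (g : K), hq⟩ * g := by
          apply Subtype.ext
          push_cast
          field_simp
        exact Submodule.mem_span_singleton.mpr ⟨_, (by rw [smul_eq_mul]; exact hyq.symm)⟩
    · rw [Submodule.span_le, Set.singleton_subset_iff]; exact hgI

end AuxNLF

lemma FG.of_le_span {R M : Type*} [CommRing R] [IsNoetherianRing R] [AddCommGroup M]
    [Module R M] (t : Finset M) (N : Submodule R M) (h : N ≤ Submodule.span R (t : Set M)) :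
    N.FG := by
  have hfg : (Submodule.span R (t : Set M)).FG := ⟨t, rfl⟩
  haveI := isNoetherian_of_fg_of_noetherian _ hfg
  have h1 : (N.comap (Submodule.span R (t : Set M)).subtype).FG := IsNoetherian.noetherian _
  have h2 := h1.map (Submodule.span R (t : Set M)).subtype
  rwa [Submodule.map_comap_subtype, inf_eq_right.mpr h] at h2

/-- Noncommutative version of `isIntegral_of_smul_mem_submodule`. -/
lemma isIntegral_of_smul_mem_submodule' {R : Type*} [CommRing R] {A : Type*} [Ring A]
    [Algebra R A] {M : Type*} [AddCommGroup M] [Module R M] [Module A M]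
    [NoZeroSMulDivisors A M]
    (hst : ∀ (r : R) (a : A) (m : M), (r • a) • m = r • (a • m)) (N : Submodule R M)
    (hN : N ≠ ⊥) (hN' : N.FG) (x : A) (hx : ∀ n ∈ N, x • n ∈ N) : IsIntegral R x := by
  haveI : IsScalarTower R A M := ⟨hst⟩
  let A' : Subalgebra R A :=
    { carrier := { x | ∀ n ∈ N, x • n ∈ N }
      mul_mem' := fun {a b} ha hb n hn => smul_smul a b n ▸ ha _ (hb _ hn)
      one_mem' := fun n hn => (one_smul A n).symm ▸ hn
      add_mem' := fun {a b} ha hb n hn => (add_smul a b n).symm ▸ N.add_mem (ha _ hn) (hb _ hn)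
      zero_mem' := fun n _hn => (zero_smul A n).symm ▸ N.zero_mem
      algebraMap_mem' := fun r n hn => (algebraMap_smul A r n).symm ▸ N.smul_mem r hn }
  let f : A' →ₐ[R] Module.End R N :=
    AlgHom.ofLinearMap
      { toFun := fun x => (DistribMulAction.toLinearMap R M x).restrict x.prop
        map_add' := by intros x y; ext; exact add_smul _ _ _
        map_smul' := by intros r s; ext; apply smul_assoc }
      (by ext; apply one_smul)
      (by intros x y; ext; apply mul_smul)
  obtain ⟨a, ha₁, ha₂⟩ : ∃ a ∈ N, a ≠ (0 : M) := by
    by_contra! h'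
    apply hN
    rwa [eq_bot_iff]
  have hinj : Function.Injective f := by
    show Function.Injective f.toLinearMap
    rw [← LinearMap.ker_eq_bot, eq_bot_iff]
    intro s hs
    have : s.1 • a = 0 := congr_arg Subtype.val (LinearMap.congr_fun hs ⟨a, ha₁⟩)
    exact Subtype.ext ((eq_zero_or_eq_zero_of_smul_eq_zero this).resolve_right ha₂)
  show IsIntegral R (A'.val ⟨x, hx⟩)
  rw [isIntegral_algHom_iff A'.val Subtype.val_injective, ← isIntegral_algHom_iff f hinj]
  haveI : Module.Finite R N := by rwa [Module.finite_def, Submodule.fg_top]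
  apply Algebra.IsIntegral.isIntegral

/-- A central division algebra `D` over a nonarchimedean local field `K` contains a
unique maximal order, namely the set of elements integral over `O_K`, which is the
closed unit ball `{x : |x| ≤ 1}` for the extended absolute value. -/
theorem unique_maximal_order_of_division_algebra
    (K : Type*) [NonarchLocalField K] (O : Subring K) (hO : ∀ x : K, x ∈ O ↔ ‖x‖ ≤ 1)
    (D : Type*) [NormedDivisionRing D] [NormedAlgebra K D] [FiniteDimensional K D]
    [Algebra.IsCentral K D]
    (hext : ∀ k : K, ‖algebraMap K D k‖ = ‖k‖) :
    (∃! 𝔇 : Subring D, IsMaximalOrder K O 𝔇) ∧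
    (∀ 𝔇 : Subring D, IsMaximalOrder K O 𝔇 → (𝔇 : Set D) = {x : D | ‖x‖ ≤ 1}) ∧
    {x : D | ‖x‖ ≤ 1} = integralSet K O D := by
  classical
  haveI : LocallyCompactSpace K := NonarchLocalField.locallyCompact
  haveI : ProperSpace K := ProperSpace.of_locallyCompactSpace K
  obtain ⟨π, hπ0, hπ1, hπmax⟩ := NLF.exists_uniformizer K
  haveI : IsPrincipalIdealRing O := NLF.O_pid O hO hπ0 hπ1 hπmax
  haveI : IsNoetherianRing O := PrincipalIdealRing.isNoetherianRing
  have hπK : π ≠ 0 := norm_pos_iff.mp hπ0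
  letI : Algebra O D :=
    ((algebraMap K D).comp O.subtype).toAlgebra' (fun c x => Algebra.commutes (c : K) x)
  have hnorm_alg : ∀ (c : K) (x : D), ‖algebraMap K D c * x‖ = ‖c‖ * ‖x‖ :=
    fun c x => by rw [norm_mul, hext]
  have hOnorm : ∀ c : O, ‖(c : K)‖ ≤ 1 := fun c => (hO c).mp c.2
  -- powers bounded implies norm at most one
  have hple : ∀ (x : D) (C : ℝ), (∀ m : ℕ, ‖x ^ m‖ ≤ C) → ‖x‖ ≤ 1 := by
    intro x C h
    by_contra hx
    push_neg at hx
    obtain ⟨m, hm⟩ := pow_unbounded_of_one_lt C hx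
    have := h m
    rw [norm_pow] at this
    linarith
  -- norm bound on elements of the O-span of a finite set
  have hspanB : ∀ (t : Finset D) (v : D), v ∈ Submodule.span O (t : Set D) →
      ‖v‖ ≤ ∑ a ∈ t, ‖a‖ := by
    intro t v hv
    obtain ⟨f, -, hf⟩ := Submodule.mem_span_finset.mp hv
    rw [← hf]
    refine le_trans (norm_sum_le _ _) (Finset.sum_le_sum fun i _ => ?_)
    have h2 : ‖((f i : K)) • i‖ ≤ ‖i‖ := by
      rw [norm_smul]
      exact mul_le_of_le_one_left (norm_nonneg i) (hOnorm _)
    have h3 : f i • i = ((f i : K)) • i := by rw [Algebra.smul_def, Algebra.smul_def]; rfl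
    rw [h3]; exact h2
  -- multiplication by O-elements preserves spans
  have hsmulmem : ∀ (t : Finset D) (c : O) (y : D), y ∈ Submodule.span O (t : Set D) →
      algebraMap K D (c : K) * y ∈ Submodule.span O (t : Set D) := by
    intro t c y hy
    have h1 : ((c : K)) • y ∈ Submodule.span O (t : Set D) := by
      have := Submodule.smul_mem _ c hy
      rw [Algebra.smul_def] at this ⊢; exact this
    have h2 : ((c : K)) • y = algebraMap K D (c : K) * y := Algebra.smul_def _ _
    rwa [h2] at h1
  -- the closed unit ball is contained in a finitely generated O-submodule
  obtain ⟨tball, htball⟩ : ∃ t : Finset D, ∀ x : D, ‖x‖ ≤ 1 →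
      x ∈ Submodule.span O (t : Set D) := by
    set b := Module.finBasis K D with hb
    have hcoord : ∀ i, ∃ Ci : ℝ, 0 ≤ Ci ∧ ∀ x : D, ‖b.repr x i‖ ≤ Ci * ‖x‖ := by
      intro i
      let ℓ : D →L[K] K := LinearMap.toContinuousLinearMap (b.coord i)
      exact ⟨‖ℓ‖, norm_nonneg _, fun x => ℓ.le_opNorm x⟩
    choose C hC0 hC using hcoord
    have hn : ∀ i, ∃ k : ℕ, ‖π‖ ^ k * C i ≤ 1 := by
      intro i
      obtain ⟨k, hk⟩ := exists_pow_lt_of_lt_one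
        (show (0:ℝ) < (C i + 1)⁻¹ by have := hC0 i; positivity) hπ1
      refine ⟨k, ?_⟩
      have hp : (0:ℝ) ≤ ‖π‖ ^ k := by positivity
      have h2 : ‖π‖ ^ k * (C i + 1) < (C i + 1)⁻¹ * (C i + 1) := by
        have := hC0 i; nlinarith
      rw [inv_mul_cancel₀ (by have := hC0 i; positivity)] at h2
      nlinarith [hC0 i]
    choose m hmle using hn
    refine ⟨Finset.image (fun i => (π ^ (m i))⁻¹ • b i) Finset.univ, ?_⟩
    intro x hx
    have key : ∀ i, (b.repr x i) • b i ∈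
        Submodule.span O ((Finset.image (fun i => (π ^ (m i))⁻¹ • b i) Finset.univ : Finset D) : Set D) := by
      intro i
      have hci : ‖π ^ (m i) * b.repr x i‖ ≤ 1 := by
        rw [norm_mul, norm_pow]
        have h1 := hC i x
        have hp : (0:ℝ) ≤ ‖π‖ ^ (m i) := by positivity
        have hr : ‖b.repr x i‖ ≤ C i :=
          le_trans h1 (mul_le_of_le_one_right (hC0 i) hx)
        have h2 : ‖π‖ ^ (m i) * ‖b.repr x i‖ ≤ ‖π‖ ^ (m i) * C i :=
          mul_le_mul_of_nonneg_left hr hp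
        linarith [hmle i]
      have hmem : (π ^ (m i))⁻¹ • b i ∈
          ((Finset.image (fun i => (π ^ (m i))⁻¹ • b i) Finset.univ : Finset D) : Set D) :=
        Finset.mem_coe.mpr (Finset.mem_image_of_mem _ (Finset.mem_univ i))
      have hsm : ((π ^ (m i) * b.repr x i : K)) • ((π ^ (m i))⁻¹ • b i) ∈
          Submodule.span O ((Finset.image (fun i => (π ^ (m i))⁻¹ • b i) Finset.univ : Finset D) : Set D) :=
        by
          have := Submodule.smul_mem _ (⟨π ^ (m i) * b.repr x i, (hO _).mpr hci⟩ : O)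
            (Submodule.subset_span hmem)
          rw [Algebra.smul_def] at this ⊢; exact this
      rw [smul_smul, show (π ^ (m i) * b.repr x i) * (π ^ (m i))⁻¹ = b.repr x i from by
        rw [mul_comm (π ^ (m i)) (b.repr x i), mul_assoc,
          mul_inv_cancel₀ (pow_ne_zero _ hπK), mul_one]] at hsm
      exact hsm
    rw [← b.sum_repr x]
    exact Submodule.sum_mem _ fun i _ => key i
  -- multiplication by ball elements preserves the span of the ball
  set S : Set D := {x : D | ‖x‖ ≤ 1} with hSdef
  set N : Submodule O D := Submodule.span O S with hNdef
  have hmulN : ∀ y, ‖y‖ ≤ 1 → ∀ v ∈ N, y * v ∈ N := by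
    intro y hy v hv
    induction hv using Submodule.span_induction with
    | mem z hz =>
        refine Submodule.subset_span ?_
        have : ‖y * z‖ ≤ 1 := by
          rw [norm_mul]
          exact mul_le_one₀ hy (norm_nonneg _) hz
        exact this
    | zero => rw [mul_zero]; exact N.zero_mem
    | add v w _ _ ihv ihw => rw [mul_add]; exact N.add_mem ihv ihw
    | smul c v _ ih =>
        have h1 : y * (c • v) ∈ N := by
          rw [mul_smul_comm]
          exact N.smul_mem c ih
        exact h1
  have hNle : N ≤ Submodule.span O (tball : Set D) :=
    Submodule.span_le.mpr fun x hx => htball x hx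
  have hNbound : ∀ v ∈ N, ‖v‖ ≤ ∑ a ∈ tball, ‖a‖ := fun v hv => hspanB tball v (hNle hv)
  have hone : (1 : D) ∈ N := Submodule.subset_span (by simp [hSdef])
  -- additive closure of the ball
  have haddS : ∀ a : D, ‖a‖ ≤ 1 → ∀ b : D, ‖b‖ ≤ 1 → ‖a + b‖ ≤ 1 := by
    intro a ha b hb
    have hpow : ∀ k : ℕ, (a + b) ^ k ∈ N := by
      intro k
      induction k with
      | zero => rw [pow_zero]; exact hone
      | succ k ih =>
          rw [pow_succ', add_mul]
          exact N.add_mem (hmulN a ha _ ih) (hmulN b hb _ ih)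
    exact hple _ _ fun k => hNbound _ (hpow k)
  -- the ball as a subring
  set B : Subring D :=
    { carrier := {x : D | ‖x‖ ≤ 1}
      one_mem' := by simp
      mul_mem' := fun {a b} ha hb => by
        simp only [Set.mem_setOf_eq] at *
        rw [norm_mul]
        exact mul_le_one₀ ha (norm_nonneg _) hb
      add_mem' := fun {a b} ha hb => haddS a ha b hb
      zero_mem' := by simp
      neg_mem' := fun {a} ha => by simpa using ha } with hBdef
  have hBmem : ∀ x : D, x ∈ B ↔ ‖x‖ ≤ 1 := fun x => Iff.rfl
  -- every order is contained in the closed unit ball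
  have horder_sub : ∀ D' : Subring D, IsOrder K O D' → ∀ x ∈ D', ‖x‖ ≤ 1 := by
    intro D' hD' x hx
    obtain ⟨⟨⟨t, ht⟩, -⟩, -⟩ := hD'
    exact hple x (∑ a ∈ t, ‖a‖) fun k => hspanB t _ (ht (pow_mem hx k))
  -- B is an order
  have hBorder : IsOrder K O B := by
    refine ⟨⟨⟨tball, fun x hx => htball x hx⟩, ?_⟩, ?_⟩
    · rw [eq_top_iff]
      rintro x -
      by_cases hx : x = 0
      · rw [hx]; exact Submodule.zero_mem _
      · have hx0 : (0:ℝ) < ‖x‖ := norm_pos_iff.mpr hx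
        obtain ⟨k, hk⟩ := exists_pow_lt_of_lt_one (show (0:ℝ) < ‖x‖⁻¹ by positivity) hπ1
        have hmem : (π ^ k) • x ∈ S := by
          have : ‖(π ^ k) • x‖ ≤ 1 := by
            rw [norm_smul, norm_pow]
            have h2 : ‖π‖ ^ k * ‖x‖ < ‖x‖⁻¹ * ‖x‖ := by nlinarith
            rw [inv_mul_cancel₀ (ne_of_gt hx0)] at h2
            linarith
          exact this
        have hxeq : x = (π ^ k)⁻¹ • ((π ^ k) • x) := by
          rw [smul_smul, inv_mul_cancel₀ (pow_ne_zero _ hπK), one_smul]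
        rw [hxeq]
        exact Submodule.smul_mem _ _ (Submodule.subset_span hmem)
    · intro c hc x hx
      show ‖algebraMap K D c * x‖ ≤ 1
      rw [hnorm_alg]
      have h1 : ‖c‖ ≤ 1 := (hO c).mp hc
      have h2 : ‖x‖ ≤ 1 := hx
      exact mul_le_one₀ h1 (norm_nonneg _) h2
  have hmaxsub : ∀ D' : Subring D, IsOrder K O D' → D' ≤ B :=
    fun D' hD' x hx => (hBmem x).mpr (horder_sub D' hD' x hx)
  have hBmax : IsMaximalOrder K O B :=
    ⟨hBorder, fun D' hD' hle => le_antisymm hle (hmaxsub D' hD')⟩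
  have huniq : ∀ 𝔇 : Subring D, IsMaximalOrder K O 𝔇 → 𝔇 = B :=
    fun 𝔇 h𝔇 => h𝔇.2 B hBorder (hmaxsub 𝔇 h𝔇.1)
  -- the ball equals the integral elements
  have hint_eq : {x : D | ‖x‖ ≤ 1} = integralSet K O D := by
    ext x
    show ‖x‖ ≤ 1 ↔ IsIntegral O x
    constructor
    · intro hx
      have hN_fg : N.FG := FG.of_le_span tball N hNle
      refine isIntegral_of_smul_mem_submodule' (fun r a m => ?_) N ?_ hN_fg x ?_
      · show (r • a) * m = r • (a * m)
        exact smul_mul_assoc r a m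
      · intro h
        rw [h] at hone
        simpa using hone
      · intro v hv
        show x * v ∈ N
        exact hmulN x hx v hv
    · intro hx
      obtain ⟨p, hmonic, heval⟩ := hx
      have hev2 : ∑ i ∈ Finset.range (p.natDegree + 1),
          algebraMap K D ((p.coeff i : K)) * x ^ i = 0 := by
        have h := heval
        rw [Polynomial.eval₂_eq_sum_range] at h
        exact h
      have hd : p.natDegree ≠ 0 := by
        intro h0
        have hp1 : p = 1 := (Polynomial.Monic.natDegree_eq_zero hmonic).mp h0
        rw [hp1] at heval
        rw [Polynomial.eval₂_one] at heval
        exact one_ne_zero heval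
      have hxd : x ^ p.natDegree =
          -∑ i ∈ Finset.range p.natDegree, algebraMap K D ((p.coeff i : K)) * x ^ i := by
        rw [Finset.sum_range_succ] at hev2
        have hc1 : algebraMap K D ((p.coeff p.natDegree : K)) = 1 := by
          have h1 : p.coeff p.natDegree = 1 := hmonic.coeff_natDegree
          rw [h1]
          simp
        rw [hc1, one_mul] at hev2
        exact eq_neg_of_add_eq_zero_right hev2
      set T : Finset D := (Finset.range p.natDegree).image (x ^ ·) with hT
      have hpowmem : ∀ k : ℕ, x ^ k ∈ Submodule.span O (T : Set D) := by
        intro k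
        induction k using Nat.strong_induction_on with
        | _ k ih =>
          by_cases hk : k < p.natDegree
          · exact Submodule.subset_span
              (Finset.mem_coe.mpr (Finset.mem_image_of_mem _ (Finset.mem_range.mpr hk)))
          · push_neg at hk
            have hsplit : x ^ k = x ^ (k - p.natDegree) * x ^ p.natDegree := by
              rw [← pow_add]
              congr 1
              omega
            rw [hsplit, hxd, mul_neg, Finset.mul_sum]
            refine Submodule.neg_mem _ (Submodule.sum_mem _ fun i hi => ?_)
            have hterm : x ^ (k - p.natDegree) * (algebraMap K D ((p.coeff i : K)) * x ^ i) =
                algebraMap K D ((p.coeff i : K)) * x ^ (k - p.natDegree + i) := by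
              rw [← mul_assoc, ← Algebra.commutes ((p.coeff i : K)) (x ^ (k - p.natDegree)),
                mul_assoc, ← pow_add]
            rw [hterm]
            refine hsmulmem T (p.coeff i) _ (ih _ ?_)
            have hilt := Finset.mem_range.mp hi
            omega
      exact hple x (∑ a ∈ T, ‖a‖) fun k => hspanB T _ (hpowmem k)
  -- assemble
  refine ⟨⟨B, hBmax, fun 𝔇 h𝔇 => huniq 𝔇 h𝔇⟩, ?_, hint_eq⟩
  intro 𝔇 h𝔇
  rw [huniq 𝔇 h𝔇]
  rfl
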